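/- IPCW unbiasedness: under the right-censorship model with C independent of (X, Y), Z = min(Y, C), δ = 1_{Y ≤ C}, and survival function G(t) = P(C > t) continuous with G(t) > 0 whenever P(Y > t) > 0, one has E[ δ ψ(Z) / G(Z) | X ] = E[ ψ(Y) | X ] almost surely, for any bounded measurable ψ vanishing beyond a point τ_0 with G(τ_0) > 0. -/

import Mathlib

open MeasureTheory ProbabilityTheory Filter
open scoped BigOperators Topology ENNReal

/-- IPCW conditional unbiasedness: with `Z = min(Y,C)`,
`δ = 1_{Y ≤ C}`, `G(t) = P(C > t)` continuous, `C ⊥ (X,Y)`, `ψ` bounded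
measurable vanishing beyond `τ₀` with `G(τ₀) > 0`, one has
`E[δ ψ(Z)/G(Z) | X] = E[ψ(Y) | X]` a.s. -/
theorem stmt4 {Ω : Type*} [MeasureSpace Ω] [IsProbabilityMeasure (ℙ : Measure Ω)]
    {d : ℕ} (X : Ω → (Fin d → ℝ)) (Y C : Ω → ℝ) (ψ : ℝ → ℝ) (τ₀ : ℝ) (M : ℝ)
    (hX : Measurable X) (hY : Measurable Y) (hC : Measurable C)
    (hψ : Measurable ψ) (hψbd : ∀ t, |ψ t| ≤ M) (hψ0 : ∀ t, τ₀ < t → ψ t = 0)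
    (hindep : IndepFun C (fun ω => (X ω, Y ω)) ℙ)
    (G : ℝ → ℝ) (hG : ∀ t, G t = (ℙ {ω | t < C ω}).toReal)
    (hGcont : Continuous G) (hGτ₀ : 0 < G τ₀) :
    ℙ[fun ω => (if Y ω ≤ C ω then (1:ℝ) else 0) * ψ (min (Y ω) (C ω)) /
        G (min (Y ω) (C ω)) | MeasurableSpace.comap X inferInstance]
      =ᵐ[ℙ] ℙ[fun ω => ψ (Y ω) | MeasurableSpace.comap X inferInstance] := by
  have hMnn : 0 ≤ M := le_trans (abs_nonneg _) (hψbd 0)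
  have hGmeas : Measurable G := hGcont.measurable
  have hGanti : Antitone G := by
    intro a b hab
    rw [hG, hG]
    exact ENNReal.toReal_mono (measure_ne_top _ _)
      (measure_mono fun ω h => lt_of_le_of_lt hab h)
  have hGpos : ∀ y, ψ y ≠ 0 → 0 < G y := by
    intro y hy
    have hyτ : y ≤ τ₀ := by
      by_contra h
      exact hy (hψ0 y (lt_of_not_ge h))
    exact lt_of_lt_of_le hGτ₀ (hGanti hyτ)
  -- no atoms : P(C ≥ y) = G y
  have hIci : ∀ y : ℝ, (ℙ {ω | y ≤ C ω}).toReal = G y := by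
    intro y
    have hanti : Antitone (fun n : ℕ => {ω | y - 1/(n+1) < C ω}) := by
      intro n m hnm ω hω
      simp only [Set.mem_setOf_eq] at *
      have h1 : (1:ℝ)/(m+1) ≤ 1/(n+1) := by
        apply one_div_le_one_div_of_le
        · positivity
        · exact_mod_cast Nat.add_le_add_right hnm 1
      linarith
    have hiInter : (⋂ n : ℕ, {ω | y - 1/(n+1) < C ω}) = {ω | y ≤ C ω} := by
      ext ω
      simp only [Set.mem_iInter, Set.mem_setOf_eq]
      constructor
      · intro h
        by_contra hlt
        push_neg at hlt
        obtain ⟨n, hn⟩ := exists_nat_one_div_lt (sub_pos.mpr hlt)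
        linarith [h n]
      · intro h n
        have h0 : (0:ℝ) < 1/(n+1) := by positivity
        linarith
    have htend := tendsto_measure_iInter_atTop (μ := (ℙ : Measure Ω))
      (s := fun n : ℕ => {ω | y - 1/(n+1) < C ω})
      (fun n => (hC measurableSet_Ioi).nullMeasurableSet) hanti ⟨0, measure_ne_top _ _⟩
    rw [hiInter] at htend
    have htoReal : Tendsto (fun n : ℕ => G (y - 1/(n+1))) atTop
        (𝓝 (ℙ {ω | y ≤ C ω}).toReal) :=
      ((ENNReal.tendsto_toReal (measure_ne_top _ _)).comp htend).congr
        fun n => (hG _).symm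
    have htendG : Tendsto (fun n : ℕ => G (y - 1/(n+1))) atTop (𝓝 (G y)) := by
      have h0 : Tendsto (fun n : ℕ => y - 1/(n+1)) atTop (𝓝 y) := by
        have h1 := tendsto_one_div_add_atTop_nhds_zero_nat (𝕜 := ℝ)
        simpa using tendsto_const_nhds.sub h1
      exact (hGcont.tendsto y).comp h0
    exact tendsto_nhds_unique htoReal htendG
  -- the simplified integrand
  set f' : Ω → ℝ := fun ω => if Y ω ≤ C ω then ψ (Y ω) / G (Y ω) else 0 with hf'
  have hfeq : (fun ω => (if Y ω ≤ C ω then (1:ℝ) else 0) * ψ (min (Y ω) (C ω)) /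
      G (min (Y ω) (C ω))) = f' := by
    funext ω
    by_cases h : Y ω ≤ C ω
    · simp [hf', h, min_eq_left h]
    · simp [hf', h]
  have hf'meas : Measurable f' :=
    Measurable.ite (measurableSet_le hY hC)
      ((hψ.comp hY).div (hGmeas.comp hY)) measurable_const
  have hbound : ∀ ω, ‖f' ω‖ ≤ M / G τ₀ := by
    intro ω
    have hMG : 0 ≤ M / G τ₀ := div_nonneg hMnn hGτ₀.le
    rw [Real.norm_eq_abs]
    by_cases h : Y ω ≤ C ω
    · simp only [hf', if_pos h]
      by_cases hz : ψ (Y ω) = 0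
      · simp [hz, hMG]
      · have hGy := hGpos _ hz
        have hYτ : Y ω ≤ τ₀ := by
          by_contra hc
          exact hz (hψ0 _ (lt_of_not_ge hc))
        rw [abs_div, abs_of_pos hGy]
        exact div_le_div₀ hMnn (hψbd _) hGτ₀ (hGanti hYτ)
    · simp [hf', h, hMG]
  have hf'int : Integrable f' ℙ :=
    (integrable_const (M / G τ₀)).mono' hf'meas.aestronglyMeasurable
      (Filter.Eventually.of_forall hbound)
  have hgint : Integrable (fun ω => ψ (Y ω)) ℙ :=
    (integrable_const M).mono' (hψ.comp hY).aestronglyMeasurable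
      (Filter.Eventually.of_forall fun ω => by rw [Real.norm_eq_abs]; exact hψbd _)
  have hW : Measurable (fun ω => (X ω, Y ω)) := hX.prodMk hY
  have hmap : Measure.map (fun ω => ((X ω, Y ω), C ω)) ℙ
      = (Measure.map (fun ω => (X ω, Y ω)) ℙ).prod (Measure.map C ℙ) :=
    (indepFun_iff_map_prod_eq_prod_map_map hW.aemeasurable hC.aemeasurable).mp hindep.symm
  -- key set-integral identity
  have key : ∀ A : Set (Fin d → ℝ), MeasurableSet A →
      ∫ ω in X ⁻¹' A, f' ω ∂ℙ = ∫ ω in X ⁻¹' A, ψ (Y ω) ∂ℙ := by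
    intro A hA
    set F : ((Fin d → ℝ) × ℝ) × ℝ → ℝ :=
      fun p => Set.indicator A (fun _ => (1:ℝ)) p.1.1 *
        (if p.1.2 ≤ p.2 then ψ p.1.2 / G p.1.2 else 0) with hF
    have hFmeas : Measurable F := by
      apply Measurable.mul
      · exact (measurable_const.indicator hA).comp (measurable_fst.comp measurable_fst)
      · exact Measurable.ite
          (measurableSet_le (measurable_snd.comp measurable_fst) measurable_snd)
          ((hψ.comp (measurable_snd.comp measurable_fst)).div
            (hGmeas.comp (measurable_snd.comp measurable_fst))) measurable_const
    have hFbd : ∀ p, ‖F p‖ ≤ M / G τ₀ := by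
      intro p
      have hMG : 0 ≤ M / G τ₀ := div_nonneg hMnn hGτ₀.le
      rw [Real.norm_eq_abs, hF]
      simp only [abs_mul]
      by_cases hmem : p.1.1 ∈ A
      · rw [Set.indicator_of_mem hmem]
        simp only [abs_one, one_mul]
        by_cases h : p.1.2 ≤ p.2
        · rw [if_pos h]
          by_cases hz : ψ p.1.2 = 0
          · simp [hz, hMG]
          · have hGy := hGpos _ hz
            have hYτ : p.1.2 ≤ τ₀ := by
              by_contra hc
              exact hz (hψ0 _ (lt_of_not_ge hc))
            rw [abs_div, abs_of_pos hGy]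
            exact div_le_div₀ hMnn (hψbd _) hGτ₀ (hGanti hYτ)
        · simp [h, hMG]
      · rw [Set.indicator_of_notMem hmem]
        simpa using hMG
    haveI : IsProbabilityMeasure (Measure.map C ℙ) := Measure.isProbabilityMeasure_map hC.aemeasurable
    haveI : IsProbabilityMeasure (Measure.map (fun ω => (X ω, Y ω)) ℙ) :=
      Measure.isProbabilityMeasure_map hW.aemeasurable
    have hFint : Integrable F ((Measure.map (fun ω => (X ω, Y ω)) ℙ).prod (Measure.map C ℙ)) :=
      (integrable_const (M / G τ₀)).mono' hFmeas.aestronglyMeasurable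
        (Filter.Eventually.of_forall hFbd)
    have hL : ∫ ω in X ⁻¹' A, f' ω ∂ℙ = ∫ ω, F ((X ω, Y ω), C ω) ∂ℙ := by
      rw [← integral_indicator (hX hA)]
      congr 1
      funext ω
      by_cases h : X ω ∈ A
      · simp [hF, hf', Set.indicator_apply, Set.mem_preimage, h]
      · simp [hF, hf', Set.indicator_apply, Set.mem_preimage, h]
    have hR : ∫ ω, F ((X ω, Y ω), C ω) ∂ℙ
        = ∫ p, F p ∂((Measure.map (fun ω => (X ω, Y ω)) ℙ).prod (Measure.map C ℙ)) := by
      rw [← hmap, integral_map (hW.prodMk hC).aemeasurable hFmeas.aestronglyMeasurable]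
    have hinner : ∀ w : (Fin d → ℝ) × ℝ, ∫ c, F (w, c) ∂(Measure.map C ℙ)
        = Set.indicator A (fun _ => (1:ℝ)) w.1 * ψ w.2 := by
      intro w
      have h1 : (fun c => F (w, c)) = Set.indicator (Set.Ici w.2)
          (fun _ => Set.indicator A (fun _ => (1:ℝ)) w.1 * (ψ w.2 / G w.2)) := by
        funext c
        by_cases h : w.2 ≤ c
        · rw [Set.indicator_of_mem (by exact h)]
          simp [hF, h]
        · rw [Set.indicator_of_notMem (by exact h)]
          simp [hF, h]
      rw [h1, integral_indicator measurableSet_Ici, setIntegral_const, smul_eq_mul]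
      have hμ : (Measure.map C ℙ) (Set.Ici w.2) = ℙ {ω | w.2 ≤ C ω} := by
        rw [Measure.map_apply hC measurableSet_Ici]
        rfl
      rw [measureReal_def, hμ, hIci w.2]
      by_cases hz : ψ w.2 = 0
      · simp [hz]
      · rw [mul_comm, mul_assoc, div_mul_cancel₀ _ (hGpos _ hz).ne']
    rw [hL, hR, MeasureTheory.integral_prod F hFint]
    simp_rw [hinner]
    have hgm : AEStronglyMeasurable
        (fun w : (Fin d → ℝ) × ℝ => Set.indicator A (fun _ => (1:ℝ)) w.1 * ψ w.2)
        (Measure.map (fun ω => (X ω, Y ω)) ℙ) := by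
      apply Measurable.aestronglyMeasurable
      exact ((measurable_const.indicator hA).comp measurable_fst).mul (hψ.comp measurable_snd)
    rw [integral_map hW.aemeasurable hgm]
    rw [← integral_indicator (hX hA)]
    congr 1
    funext ω
    by_cases h : X ω ∈ A
    · simp [Set.indicator_apply, Set.mem_preimage, h]
    · simp [Set.indicator_apply, Set.mem_preimage, h]
  have hm : MeasurableSpace.comap X inferInstance ≤ (inferInstance : MeasurableSpace Ω) :=
    hX.comap_le
  haveI : SigmaFinite (Measure.trim ℙ hm) := by
    haveI := isFiniteMeasure_trim hm (μ := (ℙ : Measure Ω))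
    infer_instance
  rw [hfeq]
  exact ae_eq_condExp_of_forall_setIntegral_eq hm hgint
    (fun s hs _ => integrable_condExp.integrableOn)
    (fun s hs _ => by
      rw [setIntegral_condExp hm hf'int hs]
      obtain ⟨A, hA, rfl⟩ := hs
      exact key A hA)
    stronglyMeasurable_condExp.aestronglyMeasurable
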